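/- For every graph G on n vertices, the sum over all vertices v of e(v), where e(v) is the number of edges inside the neighborhood of v, satisfies ∑_v e(v) ≥ ∑_v d(v)² − n·|E(G)|. -/
import Mathlib

open Finset

private lemma twice_card_edges {W : Type*} [Fintype W] (H : SimpleGraph W) [DecidableRel H.Adj] :
    2 * H.edgeSet.ncard = ∑ x : W, ∑ y : W, if H.Adj x y then 1 else 0 := by
  have h1 : H.edgeSet.ncard = H.edgeFinset.card := by
    rw [Set.ncard_eq_toFinset_card', SimpleGraph.edgeFinset]
  rw [h1, ← SimpleGraph.sum_degrees_eq_twice_card_edges]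
  refine Finset.sum_congr rfl fun x _ => ?_
  rw [SimpleGraph.degree, SimpleGraph.neighborFinset_eq_filter, Finset.card_filter]

private lemma vertex_count {V : Type*} [Fintype V] (G : SimpleGraph V) [DecidableRel G.Adj]
    (v : V) :
    2 * (G.induce (G.neighborSet v)).edgeSet.ncard
      = ∑ x : V, ∑ y : V, if G.Adj v x ∧ G.Adj v y ∧ G.Adj x y then 1 else 0 := by
  classical
  rw [twice_card_edges]
  have hL : (∑ x : (G.neighborSet v), ∑ y : (G.neighborSet v),
      if (G.induce (G.neighborSet v)).Adj x y then 1 else 0)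
      = ∑ x ∈ (G.neighborSet v).toFinset, ∑ y ∈ (G.neighborSet v).toFinset,
        if G.Adj x y then 1 else 0 := by
    rw [show (∑ x : (G.neighborSet v), ∑ y : (G.neighborSet v),
        if (G.induce (G.neighborSet v)).Adj x y then 1 else 0)
        = ∑ x : (G.neighborSet v), (fun a : V => ∑ y : (G.neighborSet v),
          if G.Adj a (y : V) then 1 else 0) (x : V) from rfl]
    rw [Finset.sum_set_coe (f := fun a : V => ∑ y : (G.neighborSet v), if G.Adj a (y : V) then 1 else 0)]
    refine Finset.sum_congr rfl fun x _ => ?_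
    exact Finset.sum_set_coe (s := G.neighborSet v) (f := fun a => if G.Adj x a then 1 else 0)
  rw [hL]
  have hF : (G.neighborSet v).toFinset = Finset.univ.filter (G.Adj v) := by
    ext x; simp
  rw [hF]
  rw [Finset.sum_filter]
  refine Finset.sum_congr rfl fun x _ => ?_
  by_cases h : G.Adj v x
  · simp only [h, if_true, true_and, ite_and, Finset.sum_filter]
  · simp [h]

theorem stmt1 {V : Type*} [Fintype V] (G : SimpleGraph V) :
    (∑ v : V, ((G.induce (G.neighborSet v)).edgeSet.ncard : ℝ)) ≥
      (∑ v : V, ((G.neighborSet v).ncard : ℝ) ^ 2) -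
        (Fintype.card V : ℝ) * (G.edgeSet.ncard : ℝ) := by
  classical
  set n := Fintype.card V with hn
  have hdeg : ∀ x, (G.neighborSet x).ncard = G.degree x := fun x => by
    rw [Set.ncard_eq_toFinset_card']; rfl
  -- the natural number inequality, doubled
  have key : 2 * (∑ v, G.degree v ^ 2)
      ≤ 2 * ((∑ v : V, (G.induce (G.neighborSet v)).edgeSet.ncard) + n * G.edgeSet.ncard) := by
    have hL : 2 * (∑ v, G.degree v ^ 2)
        = ∑ x : V, ∑ y : V, if G.Adj x y then G.degree x + G.degree y else 0 := by
      have h1 : ∀ x : V, (∑ y : V, if G.Adj x y then G.degree x else 0)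
          = G.degree x ^ 2 := by
        intro x
        rw [← Finset.sum_filter, Finset.sum_const, ← SimpleGraph.neighborFinset_eq_filter,
          smul_eq_mul, sq, SimpleGraph.degree]
      have h2 : (∑ x : V, ∑ y : V, if G.Adj x y then G.degree y else 0)
          = ∑ v, G.degree v ^ 2 := by
        rw [Finset.sum_comm]
        refine Finset.sum_congr rfl fun y _ => ?_
        simp_rw [G.adj_comm]
        exact h1 y
      simp_rw [fun x y => show (if G.Adj x y then G.degree x + G.degree y else 0)
          = (if G.Adj x y then G.degree x else 0) + (if G.Adj x y then G.degree y else 0) by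
        split_ifs <;> simp]
      simp_rw [Finset.sum_add_distrib]
      rw [h2]
      simp_rw [h1]
      rw [two_mul]
    have hR : 2 * ((∑ v : V, (G.induce (G.neighborSet v)).edgeSet.ncard) + n * G.edgeSet.ncard)
        = ∑ x : V, ∑ y : V,
            ((∑ v : V, if G.Adj v x ∧ G.Adj v y ∧ G.Adj x y then 1 else 0)
              + n * if G.Adj x y then 1 else 0) := by
      rw [mul_add, Finset.mul_sum]
      simp_rw [vertex_count G]
      rw [Finset.sum_comm]
      conv_lhs => rw [Finset.sum_congr rfl fun v _ => Finset.sum_comm]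
      rw [show 2 * (n * G.edgeSet.ncard) = n * (2 * G.edgeSet.ncard) by ring,
        twice_card_edges G, Finset.mul_sum]
      simp_rw [Finset.mul_sum]
      rw [← Finset.sum_add_distrib]
      refine Finset.sum_congr rfl fun x _ => ?_
      rw [← Finset.sum_add_distrib]
    rw [hL, hR]
    refine Finset.sum_le_sum fun x _ => Finset.sum_le_sum fun y _ => ?_
    by_cases hxy : G.Adj x y
    · simp only [hxy, if_true, and_true, mul_one]
      have hv : (∑ v : V, if G.Adj v x ∧ G.Adj v y then 1 else 0)
          = (Finset.univ.filter fun v => G.Adj v x ∧ G.Adj v y).card :=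
        (Finset.card_filter _ _).symm
      rw [hv, Finset.filter_and]
      have hx : (Finset.univ.filter fun v => G.Adj v x) = G.neighborFinset x := by
        ext w; simp [G.adj_comm]
      have hy : (Finset.univ.filter fun v => G.Adj v y) = G.neighborFinset y := by
        ext w; simp [G.adj_comm]
      rw [hx, hy]
      have h3 := Finset.card_union_add_card_inter (G.neighborFinset x) (G.neighborFinset y)
      have hub : (G.neighborFinset x ∪ G.neighborFinset y).card ≤ n := Finset.card_le_univ _
      rw [SimpleGraph.degree, SimpleGraph.degree]
      omega
    · simp [hxy]
  have final : (∑ v, G.degree v ^ 2)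
      ≤ (∑ v : V, (G.induce (G.neighborSet v)).edgeSet.ncard) + n * G.edgeSet.ncard :=
    Nat.le_of_mul_le_mul_left key two_pos
  rw [ge_iff_le, sub_le_iff_le_add]
  simp_rw [hdeg]
  exact_mod_cast final
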